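/- Let $L, m > 0$, let $a, b$ be positive even $C^1([-L,L])$ functions, and let $G$ be an even $C^{1,1}_{loc}(\mathbb{R})$ function with $(ab)' \ge 0$ on $(0,L)$, $G \ge G(m)$ on $(0,\infty)$, and $G' \le 0$ on $(0,m)$. Then the boundary value problem $-(a u')' = -b G'(u)$ on $(-L,L)$, $u(L) = -u(-L) = m$, admits at most one solution; moreover any solution is odd (i.e. $u(-x) = -u(x)$) and strictly increasing. -/

import Mathlib

open Set

/-- A (classical) solution of the boundary value problem
`-(a u')' = -b G'(u)` on `(-L, L)`, `u(L) = -u(-L) = m`: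
`u ∈ C¹([-L,L])` with `(a u')' = b G'(u)` pointwise in `(-L, L)`. -/
def IsSolutionBVP (L m : ℝ) (a b G' : ℝ → ℝ) (u : ℝ → ℝ) : Prop :=
  ∃ u' : ℝ → ℝ,
    (∀ x ∈ Set.Icc (-L) L, HasDerivWithinAt u (u' x) (Set.Icc (-L) L) x) ∧
    ContinuousOn u' (Set.Icc (-L) L) ∧
    (∀ x ∈ Set.Ioo (-L) L, HasDerivAt (fun y => a y * u' y) (b x * G' (u x)) x) ∧
    u (-L) = -m ∧ u L = m

open Filter Topology
set_option maxHeartbeats 1000000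

section Sys

variable {L : ℝ} {a b G' : ℝ → ℝ}

/-- The first-order system associated to `(a u')' = b G'(u)` on `[-L, L]`:
`u' = p / a`, `p' = b G'(u)`. -/
def SysPair (L : ℝ) (a b G' : ℝ → ℝ) (u p : ℝ → ℝ) : Prop :=
  ContinuousOn u (Icc (-L) L) ∧ ContinuousOn p (Icc (-L) L) ∧
  (∀ x ∈ Icc (-L) L, HasDerivWithinAt u (p x / a x) (Icc (-L) L) x) ∧
  (∀ x ∈ Ioo (-L) L, HasDerivAt p (b x * G' (u x)) x)

lemma sysPair_reflect (haeven : ∀ x, a (-x) = a x) (hbeven : ∀ x, b (-x) = b x)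
    {u p : ℝ → ℝ} (h : SysPair L a b G' u p) :
    SysPair L a b G' (fun x => u (-x)) (fun x => -p (-x)) := by
  obtain ⟨hu, hp, hud, hpd⟩ := h
  have hnegmaps : MapsTo (fun x : ℝ => -x) (Icc (-L) L) (Icc (-L) L) := by
    intro x hx
    obtain ⟨h1,h2⟩ := hx; exact ⟨by dsimp only; linarith, by dsimp only; linarith⟩
  have hnegmem : ∀ x ∈ Icc (-L) L, -x ∈ Icc (-L) L := fun x hx => hnegmaps hx
  refine ⟨hu.comp (continuous_neg.continuousOn) hnegmaps,
    (hp.comp (continuous_neg.continuousOn) hnegmaps).neg, ?_, ?_⟩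
  · intro x hx
    have h1 : HasDerivWithinAt (fun y : ℝ => u (-y)) (p (-x) / a (-x) * (-1)) (Icc (-L) L) x := by
      exact (hud (-x) (hnegmem x hx)).comp x (hasDerivWithinAt_neg x (Icc (-L) L)) hnegmaps
    -- fix the derivative value
    have : p (-x) / a (-x) * (-1) = -p (-x) / a x := by
      rw [haeven]; ring
    rw [this] at h1
    exact h1
  · intro x hx
    have hnx : -x ∈ Ioo (-L) L := by
      obtain ⟨h1,h2⟩ := hx; exact ⟨by linarith, by linarith⟩
    have h1 : HasDerivAt (fun y : ℝ => p (-y)) (b (-x) * G' (u (-x)) * (-1)) x :=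
      (hpd (-x) hnx).comp x (hasDerivAt_neg x)
    have h2 := h1.neg
    have : -(b (-x) * G' (u (-x)) * (-1)) = b x * G' (u (-x)) := by rw [hbeven]; ring
    rw [this] at h2
    exact h2

lemma sysPair_neg (hG'odd : ∀ s, G' (-s) = -G' s)
    {u p : ℝ → ℝ} (h : SysPair L a b G' u p) :
    SysPair L a b G' (fun x => -u x) (fun x => -p x) := by
  obtain ⟨hu, hp, hud, hpd⟩ := h
  refine ⟨hu.neg, hp.neg, ?_, ?_⟩
  · intro x hx
    have h1 := (hud x hx).neg
    have : -(p x / a x) = -p x / a x := by ring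
    rw [this] at h1
    exact h1
  · intro x hx
    have h1 := (hpd x hx).neg
    have : -(b x * G' (u x)) = b x * G' (-u x) := by rw [hG'odd]; ring
    rw [this] at h1
    exact h1

end Sys

section Sys2
variable {L : ℝ} {a b G' : ℝ → ℝ}

lemma sys_local_step
    (hacont : ContinuousOn a (Icc (-L) L)) (hbcont : ContinuousOn b (Icc (-L) L))
    (hapos : ∀ x ∈ Icc (-L) L, 0 < a x) (hbpos : ∀ x ∈ Icc (-L) L, 0 < b x)
    (hG'lip : LocallyLipschitz G')
    {u₁ p₁ u₂ p₂ : ℝ → ℝ}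
    (h₁ : SysPair L a b G' u₁ p₁) (h₂ : SysPair L a b G' u₂ p₂)
    {y : ℝ} (hyI : y ∈ Icc (-L) L) (hyL : y < L)
    (hu0 : u₁ y = u₂ y) (hp0 : p₁ y = p₂ y) :
    ∃ z, y < z ∧ z ≤ L ∧ ∀ t ∈ Icc y z, u₁ t = u₂ t ∧ p₁ t = p₂ t := by
  obtain ⟨xa, hxa, hxamin⟩ :=
    isCompact_Icc.exists_isMinOn (⟨y, hyI⟩ : (Icc (-L) L).Nonempty) hacont
  obtain ⟨xb, hxb, hxbmax⟩ :=
    isCompact_Icc.exists_isMaxOn (⟨y, hyI⟩ : (Icc (-L) L).Nonempty) hbcont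
  have hamin : ∀ x ∈ Icc (-L) L, a xa ≤ a x := fun x hx => hxamin hx
  have hbmax : ∀ x ∈ Icc (-L) L, b x ≤ b xb := fun x hx => hxbmax hx
  have haminpos : 0 < a xa := hapos xa hxa
  have hbmaxpos : 0 < b xb := hbpos xb hxb
  set c := u₁ y with hc
  obtain ⟨K, t, htmem, hKlip⟩ := hG'lip c
  obtain ⟨r, hrpos, hball⟩ := Metric.mem_nhds_iff.1 htmem
  have hsub : Icc y L ⊆ Icc (-L) L := Icc_subset_Icc hyI.1 le_rfl
  have hcw1 : ContinuousWithinAt u₁ (Icc y L) y := (h₁.1 y hyI).mono hsub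
  have hcw2 : ContinuousWithinAt u₂ (Icc y L) y := (h₂.1 y hyI).mono hsub
  have hb1 : u₁ ⁻¹' Metric.ball c r ∈ 𝓝[Icc y L] y :=
    hcw1 (Metric.ball_mem_nhds c hrpos)
  have hb2 : u₂ ⁻¹' Metric.ball c r ∈ 𝓝[Icc y L] y := by
    apply hcw2
    rw [show u₂ y = c from hu0.symm]
    exact Metric.ball_mem_nhds c hrpos
  have hV := Filter.inter_mem hb1 hb2
  rw [nhdsWithin_Icc_eq_nhdsGE hyL, mem_nhdsGE_iff_exists_Icc_subset] at hV
  obtain ⟨z', hz'y, hz'sub⟩ := hV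
  set z := min z' L with hzdef
  have hyz : y < z := lt_min hz'y hyL
  have hzL : z ≤ L := min_le_right _ _
  have hJsub : Icc y z ⊆ Icc (-L) L := Icc_subset_Icc hyI.1 hzL
  have hJsub' : Icc y z ⊆ Icc y z' := Icc_subset_Icc le_rfl (min_le_left _ _)
  refine ⟨z, hyz, hzL, ?_⟩
  set C : ℝ := (a xa)⁻¹ + b xb * K with hC
  set w : ℝ → ℝ := fun x => (u₁ x - u₂ x)^2 + (p₁ x - p₂ x)^2 with hwdef
  set g : ℝ → ℝ := fun x => w x * Real.exp (-C * x) with hgdef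
  have hwcont : ContinuousOn w (Icc (-L) L) :=
    ((h₁.1.sub h₂.1).pow 2).add ((h₁.2.1.sub h₂.2.1).pow 2)
  have hgcont : ContinuousOn g (Icc y z) :=
    (hwcont.mono hJsub).mul
      ((Real.continuous_exp.comp (continuous_const.mul continuous_id)).continuousOn)
  have hkey : ∀ x ∈ Ioo y z, ∃ gd, HasDerivAt g gd x ∧ gd ≤ 0 := by
    intro x hx
    have hxI : x ∈ Ioo (-L) L := ⟨lt_of_le_of_lt hyI.1 hx.1, lt_of_lt_of_le hx.2 hzL⟩
    have hxmem : x ∈ Icc (-L) L := Ioo_subset_Icc_self hxI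
    have hnhds : Icc (-L) L ∈ 𝓝 x := Icc_mem_nhds hxI.1 hxI.2
    have hu₁d : HasDerivAt u₁ (p₁ x / a x) x := (h₁.2.2.1 x hxmem).hasDerivAt hnhds
    have hu₂d : HasDerivAt u₂ (p₂ x / a x) x := (h₂.2.2.1 x hxmem).hasDerivAt hnhds
    have hp₁d : HasDerivAt p₁ (b x * G' (u₁ x)) x := h₁.2.2.2 x hxI
    have hp₂d : HasDerivAt p₂ (b x * G' (u₂ x)) x := h₂.2.2.2 x hxI
    set du := u₁ x - u₂ x with hdu
    set dp := p₁ x - p₂ x with hdp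
    set W' : ℝ := 2*du*(p₁ x / a x - p₂ x / a x) + 2*dp*(b x * G' (u₁ x) - b x * G' (u₂ x))
      with hW'
    have hwd : HasDerivAt w W' x := by
      have t1 := (hu₁d.sub hu₂d).pow 2
      have t2 := (hp₁d.sub hp₂d).pow 2
      have := t1.add t2
      refine this.congr_deriv ?_
      rw [hW', hdu, hdp]; push_cast [Pi.sub_apply]; ring
    have hed : HasDerivAt (fun x : ℝ => Real.exp (-C * x)) (Real.exp (-C * x) * (-C * 1)) x :=
      ((hasDerivAt_id x).const_mul (-C)).exp
    have hgd : HasDerivAt g (W' * Real.exp (-C*x) + w x * (Real.exp (-C*x) * (-C*1))) x :=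
      hwd.mul hed
    refine ⟨_, hgd, ?_⟩
    -- the Grönwall inequality W' ≤ C * w x
    have hxJ : x ∈ Icc y z := Ioo_subset_Icc_self hx
    have hmem1 : u₁ x ∈ t := hball (hz'sub (hJsub' hxJ)).1
    have hmem2 : u₂ x ∈ t := hball (hz'sub (hJsub' hxJ)).2
    have hlip : |G' (u₁ x) - G' (u₂ x)| ≤ K * |du| := by
      have := hKlip.dist_le_mul (u₁ x) hmem1 (u₂ x) hmem2
      simpa [Real.dist_eq] using this
    have hA : 0 < a x := hapos x hxmem
    have hAmin : a xa ≤ a x := hamin x hxmem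
    have hB : 0 < b x := hbpos x hxmem
    have hBmax : b x ≤ b xb := hbmax x hxmem
    have hKnn : (0:ℝ) ≤ K := K.coe_nonneg
    have T1 : 2*du*(p₁ x / a x - p₂ x / a x) ≤ (a xa)⁻¹ * (du^2 + dp^2) := by
      have e1 : p₁ x / a x - p₂ x / a x = dp / a x := by rw [hdp]; ring
      rw [e1]
      have h1 : 2*du*dp ≤ du^2+dp^2 := by nlinarith [sq_nonneg (du-dp)]
      have h3 : (2*du*dp)/(a x) ≤ (du^2+dp^2)/(a xa) :=
        div_le_div₀ (by positivity) h1 haminpos hAmin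
      calc 2*du*(dp / a x) = (2*du*dp)/(a x) := by ring
        _ ≤ (du^2+dp^2)/(a xa) := h3
        _ = (a xa)⁻¹ * (du^2+dp^2) := by rw [inv_mul_eq_div]
    have T2 : 2*dp*(b x * G' (u₁ x) - b x * G' (u₂ x)) ≤ (b xb * K) * (du^2+dp^2) := by
      set dG := G' (u₁ x) - G' (u₂ x) with hdG
      have e1 : b x * G' (u₁ x) - b x * G' (u₂ x) = b x * dG := by rw [hdG]; ring
      rw [e1]
      have h2d : 2 * |dp| * |du| ≤ du^2 + dp^2 := by
        nlinarith [sq_nonneg (|du|-|dp|), sq_abs du, sq_abs dp]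
      calc 2*dp*(b x * dG) ≤ |2*dp*(b x * dG)| := le_abs_self _
        _ = 2 * |dp| * (b x * |dG|) := by
            rw [abs_mul, abs_mul, abs_mul, abs_two, abs_of_pos hB]
        _ ≤ 2 * |dp| * (b xb * (K * |du|)) := by
            have : b x * |dG| ≤ b xb * (K * |du|) :=
              mul_le_mul hBmax hlip (abs_nonneg _) (le_trans hB.le hBmax)
            have h2 : (0:ℝ) ≤ 2 * |dp| := by positivity
            exact mul_le_mul_of_nonneg_left this h2
        _ = (b xb * K) * (2 * |dp| * |du|) := by ring
        _ ≤ (b xb * K) * (du^2+dp^2) :=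
            mul_le_mul_of_nonneg_left h2d (by positivity)
    have hfinal : W' ≤ C * (du^2 + dp^2) := by
      rw [hW', hC]; rw [add_mul]; exact add_le_add T1 T2
    have hwx : w x = du^2 + dp^2 := rfl
    have heq : W' * Real.exp (-C*x) + w x * (Real.exp (-C*x) * (-C*1))
        = (W' - C * (du^2+dp^2)) * Real.exp (-C*x) := by rw [hwx]; ring
    rw [heq]
    exact mul_nonpos_of_nonpos_of_nonneg (by linarith) (Real.exp_pos _).le
  have hant : AntitoneOn g (Icc y z) := by
    apply antitoneOn_of_deriv_nonpos (convex_Icc y z) hgcont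
    · intro x hx
      rw [interior_Icc] at hx
      obtain ⟨gd, h1, _⟩ := hkey x hx
      exact h1.differentiableAt.differentiableWithinAt
    · intro x hx
      rw [interior_Icc] at hx
      obtain ⟨gd, h1, h2⟩ := hkey x hx
      rw [h1.deriv]; exact h2
  intro s hs
  have hgy : g y = 0 := by
    have e1 : u₁ y = u₂ y := hu0
    simp only [hgdef, hwdef, e1, hp0]
    ring
  have hgs : g s ≤ 0 := by
    rw [← hgy]
    exact hant (left_mem_Icc.2 hyz.le) hs hs.1
  have hws : w s = 0 := by
    have h1 : 0 ≤ w s := by rw [hwdef]; positivity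
    have h2 : 0 < Real.exp (-C * s) := Real.exp_pos _
    by_contra hne
    have : 0 < w s := lt_of_le_of_ne h1 (Ne.symm hne)
    have : 0 < g s := by rw [hgdef]; positivity
    linarith
  have h1 : (u₁ s - u₂ s)^2 = 0 := by
    have := sq_nonneg (u₁ s - u₂ s); have := sq_nonneg (p₁ s - p₂ s)
    have hws' : (u₁ s - u₂ s)^2 + (p₁ s - p₂ s)^2 = 0 := hws
    linarith
  have h2 : (p₁ s - p₂ s)^2 = 0 := by
    have := sq_nonneg (u₁ s - u₂ s)
    have hws' : (u₁ s - u₂ s)^2 + (p₁ s - p₂ s)^2 = 0 := hws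
    linarith
  constructor
  · have := pow_eq_zero_iff (n := 2) (by norm_num) |>.1 h1
    linarith [sub_eq_zero.1 this]
  · have := pow_eq_zero_iff (n := 2) (by norm_num) |>.1 h2
    linarith [sub_eq_zero.1 this]

end Sys2

section Sys3
variable {L : ℝ} {a b G' : ℝ → ℝ}

lemma sys_forward_unique
    (hacont : ContinuousOn a (Icc (-L) L)) (hbcont : ContinuousOn b (Icc (-L) L))
    (hapos : ∀ x ∈ Icc (-L) L, 0 < a x) (hbpos : ∀ x ∈ Icc (-L) L, 0 < b x)
    (hG'lip : LocallyLipschitz G')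
    {u₁ p₁ u₂ p₂ : ℝ → ℝ}
    (h₁ : SysPair L a b G' u₁ p₁) (h₂ : SysPair L a b G' u₂ p₂)
    {x0 : ℝ} (hx0 : x0 ∈ Icc (-L) L) (hu0 : u₁ x0 = u₂ x0) (hp0 : p₁ x0 = p₂ x0) :
    ∀ x ∈ Icc x0 L, u₁ x = u₂ x ∧ p₁ x = p₂ x := by
  set A := {x | x ∈ Icc x0 L ∧ ∀ t ∈ Icc x0 x, u₁ t = u₂ t ∧ p₁ t = p₂ t} with hA
  have hx0A : x0 ∈ A := by
    refine ⟨⟨le_rfl, hx0.2⟩, fun t ht => ?_⟩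
    have : t = x0 := le_antisymm ht.2 ht.1
    rw [this]; exact ⟨hu0, hp0⟩
  have hbdd : BddAbove A := ⟨L, fun x hx => hx.1.2⟩
  have hne : A.Nonempty := ⟨x0, hx0A⟩
  set Y := sSup A with hY
  have hx0Y : x0 ≤ Y := le_csSup hbdd hx0A
  have hYL : Y ≤ L := csSup_le hne (fun x hx => hx.1.2)
  have hYI : Y ∈ Icc (-L) L := ⟨le_trans hx0.1 hx0Y, hYL⟩
  have heqIco : ∀ t ∈ Ico x0 Y, u₁ t = u₂ t ∧ p₁ t = p₂ t := by
    intro t ht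
    obtain ⟨x, hxA, htx⟩ := exists_lt_of_lt_csSup hne ht.2
    exact hxA.2 t ⟨ht.1, htx.le⟩
  have heqY : u₁ Y = u₂ Y ∧ p₁ Y = p₂ Y := by
    rcases eq_or_lt_of_le hx0Y with h|h
    · rw [← h]; exact ⟨hu0, hp0⟩
    · have hclo : Y ∈ closure (Ico x0 Y) := by
        rw [closure_Ico h.ne]; exact ⟨h.le, le_rfl⟩
      haveI hNB : (𝓝[Ico x0 Y] Y).NeBot := mem_closure_iff_nhdsWithin_neBot.1 hclo
      have hsub2 : Ico x0 Y ⊆ Icc (-L) L := fun t ht =>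
        ⟨le_trans hx0.1 ht.1, le_trans ht.2.le hYL⟩
      have l1 : Tendsto u₁ (𝓝[Ico x0 Y] Y) (𝓝 (u₁ Y)) := (h₁.1 Y hYI).mono hsub2
      have l2 : Tendsto u₂ (𝓝[Ico x0 Y] Y) (𝓝 (u₂ Y)) := (h₂.1 Y hYI).mono hsub2
      have l1p : Tendsto p₁ (𝓝[Ico x0 Y] Y) (𝓝 (p₁ Y)) := (h₁.2.1 Y hYI).mono hsub2
      have l2p : Tendsto p₂ (𝓝[Ico x0 Y] Y) (𝓝 (p₂ Y)) := (h₂.2.1 Y hYI).mono hsub2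
      have e1 : u₁ =ᶠ[𝓝[Ico x0 Y] Y] u₂ :=
        eventually_nhdsWithin_of_forall (fun t ht => (heqIco t ht).1)
      have e2 : p₁ =ᶠ[𝓝[Ico x0 Y] Y] p₂ :=
        eventually_nhdsWithin_of_forall (fun t ht => (heqIco t ht).2)
      exact ⟨tendsto_nhds_unique (l1.congr' e1) l2, tendsto_nhds_unique (l1p.congr' e2) l2p⟩
  have hYA : Y ∈ A := by
    refine ⟨⟨hx0Y, hYL⟩, fun t ht => ?_⟩
    rcases eq_or_lt_of_le ht.2 with h|h
    · rw [h]; exact heqY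
    · exact heqIco t ⟨ht.1, h⟩
  rcases eq_or_lt_of_le hYL with hYeq|hYlt
  · intro x hx
    exact hYA.2 x ⟨hx.1, by rw [hYeq]; exact hx.2⟩
  · exfalso
    obtain ⟨z, hz1, hz2, hz3⟩ := sys_local_step hacont hbcont hapos hbpos hG'lip h₁ h₂
      hYI hYlt heqY.1 heqY.2
    have hzA : z ∈ A := by
      refine ⟨⟨le_trans hx0Y hz1.le, hz2⟩, fun t ht => ?_⟩
      rcases le_total t Y with h|h
      · exact hYA.2 t ⟨ht.1, h⟩
      · exact hz3 t ⟨h, ht.2⟩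
    have : z ≤ Y := le_csSup hbdd hzA
    linarith

lemma sys_unique
    (hacont : ContinuousOn a (Icc (-L) L)) (hbcont : ContinuousOn b (Icc (-L) L))
    (hapos : ∀ x ∈ Icc (-L) L, 0 < a x) (hbpos : ∀ x ∈ Icc (-L) L, 0 < b x)
    (haeven : ∀ x, a (-x) = a x) (hbeven : ∀ x, b (-x) = b x)
    (hG'lip : LocallyLipschitz G')
    {u₁ p₁ u₂ p₂ : ℝ → ℝ}
    (h₁ : SysPair L a b G' u₁ p₁) (h₂ : SysPair L a b G' u₂ p₂)
    {x0 : ℝ} (hx0 : x0 ∈ Icc (-L) L) (hu0 : u₁ x0 = u₂ x0) (hp0 : p₁ x0 = p₂ x0) :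
    ∀ x ∈ Icc (-L) L, u₁ x = u₂ x ∧ p₁ x = p₂ x := by
  have hfwd := sys_forward_unique hacont hbcont hapos hbpos hG'lip h₁ h₂ hx0 hu0 hp0
  have h₁' := sysPair_reflect haeven hbeven h₁
  have h₂' := sysPair_reflect haeven hbeven h₂
  have hx0' : -x0 ∈ Icc (-L) L := ⟨by linarith [hx0.2], by linarith [hx0.1]⟩
  have hu0' : u₁ (- -x0) = u₂ (- -x0) := by rw [neg_neg]; exact hu0
  have hp0' : -p₁ (- -x0) = -p₂ (- -x0) := by rw [neg_neg, hp0]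
  have hbwd := sys_forward_unique hacont hbcont hapos hbpos hG'lip h₁' h₂' hx0' hu0' hp0'
  intro x hx
  rcases le_total x0 x with h|h
  · exact hfwd x ⟨h, hx.2⟩
  · have hmem : -x ∈ Icc (-x0) L := ⟨by linarith, by linarith [hx.1]⟩
    obtain ⟨e1, e2⟩ := hbwd (-x) hmem
    rw [neg_neg] at e1 e2
    exact ⟨e1, by linarith⟩

end Sys3

section Gfacts
variable {G G' : ℝ → ℝ} {m : ℝ}

lemma G'_odd (hGeven : ∀ s, G (-s) = G s) (hG : ∀ s, HasDerivAt G (G' s) s) :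
    ∀ s, G' (-s) = -G' s := by
  intro s
  have h1 : HasDerivAt (fun y : ℝ => G (-y)) (G' (-s) * (-1)) s :=
    (hG (-s)).comp s (hasDerivAt_neg s)
  have h2 : (fun y : ℝ => G (-y)) = G := funext hGeven
  rw [h2] at h1
  have := (hG s).unique h1
  linarith

lemma G'_zero_of_min (hm : 0 < m) (hGeven : ∀ s, G (-s) = G s)
    (hG : ∀ s, HasDerivAt G (G' s) s) (hGge : ∀ s > (0:ℝ), G m ≤ G s) :
    ∀ c, G c ≤ G m → G' c = 0 := by
  have hodd := G'_odd hGeven hG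
  have key : ∀ d, 0 < d → G d ≤ G m → G' d = 0 := by
    intro d hd hdm
    have hmin : IsLocalMin G d := by
      have hev : ∀ᶠ s in 𝓝 d, s ∈ Ioi (0:ℝ) := isOpen_Ioi.eventually_mem hd
      filter_upwards [hev] with s hs
      exact le_trans hdm (hGge s hs)
    exact hmin.hasDerivAt_eq_zero (hG d)
  intro c hc
  rcases lt_trichotomy c 0 with h|h|h
  · have h1 : G (-c) ≤ G m := by rw [hGeven]; exact hc
    have h2 : G' (-c) = 0 := key (-c) (by linarith) h1
    have h3 := hodd c
    rw [h2] at h3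
    linarith
  · have h3 := hodd 0
    rw [neg_zero] at h3
    rw [h]
    linarith
  · exact key c h hc

end Gfacts

section Solution
variable {L m : ℝ} {a b ab' G G' : ℝ → ℝ} {u u' : ℝ → ℝ}

lemma sol_deriv_pos
    (hL : 0 < L) (hm : 0 < m)
    (hacont : ContinuousOn a (Icc (-L) L)) (hbcont : ContinuousOn b (Icc (-L) L))
    (hapos : ∀ x ∈ Icc (-L) L, 0 < a x) (hbpos : ∀ x ∈ Icc (-L) L, 0 < b x)
    (haeven : ∀ x, a (-x) = a x) (hbeven : ∀ x, b (-x) = b x)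
    (hGeven : ∀ s, G (-s) = G s)
    (hG : ∀ s, HasDerivAt G (G' s) s) (hG'lip : LocallyLipschitz G')
    (hab : ∀ x ∈ Icc (-L) L,
      HasDerivWithinAt (fun y => a y * b y) (ab' x) (Icc (-L) L) x)
    (habmono : ∀ x ∈ Ioo (0:ℝ) L, 0 ≤ ab' x)
    (hGge : ∀ s > (0:ℝ), G m ≤ G s)
    (hud : ∀ x ∈ Icc (-L) L, HasDerivWithinAt u (u' x) (Icc (-L) L) x)
    (hu'c : ContinuousOn u' (Icc (-L) L))
    (hpd : ∀ x ∈ Ioo (-L) L, HasDerivAt (fun y => a y * u' y) (b x * G' (u x)) x)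
    (hul : u (-L) = -m) (huL : u L = m) :
    ∀ x ∈ Icc (-L) L, 0 < u' x := by
  have hLL : -L < L := by linarith
  have hucont : ContinuousOn u (Icc (-L) L) := fun x hx => (hud x hx).continuousWithinAt
  set p : ℝ → ℝ := fun x => a x * u' x with hp
  have hpcont : ContinuousOn p (Icc (-L) L) := hacont.mul hu'c
  have hGcont : Continuous G := by
    rw [continuous_iff_continuousAt]; exact fun s => (hG s).continuousAt
  have hmemnhds : ∀ x ∈ Ioo (-L) L, Icc (-L) L ∈ 𝓝 x := fun x hx => Icc_mem_nhds hx.1 hx.2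
  have hudAt : ∀ x ∈ Ioo (-L) L, HasDerivAt u (u' x) x := fun x hx =>
    (hud x (Ioo_subset_Icc_self hx)).hasDerivAt (hmemnhds x hx)
  have habAt : ∀ x ∈ Ioo (-L) L, HasDerivAt (fun y => a y * b y) (ab' x) x := fun x hx =>
    (hab x (Ioo_subset_Icc_self hx)).hasDerivAt (hmemnhds x hx)
  have habpos : ∀ x ∈ Icc (-L) L, 0 < a x * b x := fun x hx =>
    mul_pos (hapos x hx) (hbpos x hx)
  have hab'odd : ∀ x ∈ Ioo (-L) L, ab' (-x) = -ab' x := by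
    intro x hx
    have hnx : -x ∈ Ioo (-L) L := ⟨by linarith [hx.2], by linarith [hx.1]⟩
    have h1 := habAt x hx
    have h2 : HasDerivAt (fun y : ℝ => a (-y) * b (-y)) (ab' (-x) * (-1)) x :=
      (habAt (-x) hnx).comp x (hasDerivAt_neg x)
    have h3 : (fun y : ℝ => a (-y) * b (-y)) = fun y => a y * b y := by
      funext y; rw [haeven, hbeven]
    rw [h3] at h2
    have := h1.unique h2
    linarith
  set E : ℝ → ℝ := fun x => (p x)^2 / (a x * b x) - 2 * G (u x) with hE
  have hEcont : ContinuousOn E (Icc (-L) L) :=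
    ((hpcont.pow 2).div (hacont.mul hbcont) (fun x hx => (habpos x hx).ne')).sub
      (continuousOn_const.mul (hGcont.comp_continuousOn hucont))
  have hEd : ∀ x ∈ Ioo (-L) L,
      HasDerivAt E (-(ab' x) * (p x)^2 / (a x * b x)^2) x := by
    intro x hx
    have hxI := Ioo_subset_Icc_self hx
    have hpd' : HasDerivAt p (b x * G' (u x)) x := hpd x hx
    have h1 : HasDerivAt (fun y => (p y)^2) (2 * p x * (b x * G' (u x))) x := by
      have := hpd'.pow 2; refine this.congr_deriv ?_; push_cast; ring
    have h2 := habAt x hx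
    have h3 : HasDerivAt (fun y => (p y)^2 / (a y * b y))
        ((2 * p x * (b x * G' (u x)) * (a x * b x) - (p x)^2 * ab' x) / (a x * b x)^2) x :=
      h1.div h2 (habpos x hxI).ne'
    have h4 : HasDerivAt (fun y => G (u y)) (G' (u x) * u' x) x :=
      (hG (u x)).comp x (hudAt x hx)
    have h5 := h3.sub (h4.const_mul 2)
    refine h5.congr_deriv ?_
    have hax : a x ≠ 0 := (hapos x hxI).ne'
    have hbx : b x ≠ 0 := (hbpos x hxI).ne'
    simp only [hp]
    field_simp
    ring
  have hIccsub : Icc (0:ℝ) L ⊆ Icc (-L) L := Icc_subset_Icc (by linarith) le_rfl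
  have hIccsub' : Icc (-L) (0:ℝ) ⊆ Icc (-L) L := Icc_subset_Icc le_rfl (by linarith)
  have hEanti : AntitoneOn E (Icc 0 L) := by
    apply antitoneOn_of_deriv_nonpos (convex_Icc 0 L) (hEcont.mono hIccsub)
    · intro x hx; rw [interior_Icc] at hx
      have hxI : x ∈ Ioo (-L) L := ⟨by linarith [hx.1], hx.2⟩
      exact (hEd x hxI).differentiableAt.differentiableWithinAt
    · intro x hx; rw [interior_Icc] at hx
      have hxI : x ∈ Ioo (-L) L := ⟨by linarith [hx.1], hx.2⟩
      rw [(hEd x hxI).deriv]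
      have h1 : 0 ≤ ab' x := habmono x hx
      have h2 : 0 < (a x * b x)^2 := pow_pos (habpos x (Ioo_subset_Icc_self hxI)) 2
      have h3 : 0 ≤ ab' x * (p x)^2 / (a x * b x)^2 := by positivity
      have h4 : -(ab' x) * (p x)^2 / (a x * b x)^2
          = -(ab' x * (p x)^2 / (a x * b x)^2) := by ring
      rw [h4]; linarith
  have hEmono : MonotoneOn E (Icc (-L) 0) := by
    apply monotoneOn_of_deriv_nonneg (convex_Icc (-L) 0) (hEcont.mono hIccsub')
    · intro x hx; rw [interior_Icc] at hx
      have hxI : x ∈ Ioo (-L) L := ⟨hx.1, by linarith [hx.2]⟩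
      exact (hEd x hxI).differentiableAt.differentiableWithinAt
    · intro x hx; rw [interior_Icc] at hx
      have hxI : x ∈ Ioo (-L) L := ⟨hx.1, by linarith [hx.2]⟩
      rw [(hEd x hxI).deriv]
      have hnx : -x ∈ Ioo (0:ℝ) L := ⟨by linarith [hx.2], by linarith [hx.1]⟩
      have h0 := hab'odd x hxI
      have h1 : 0 ≤ ab' (-x) := habmono (-x) hnx
      have h1' : ab' x ≤ 0 := by rw [h0] at h1; linarith
      have h2 : 0 < (a x * b x)^2 := pow_pos (habpos x (Ioo_subset_Icc_self hxI)) 2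
      have h3 : 0 ≤ (-(ab' x)) * (p x)^2 / (a x * b x)^2 := by
        apply div_nonneg _ h2.le
        apply mul_nonneg (by linarith) (sq_nonneg _)
      exact h3
  have hstar : ∀ x ∈ Icc (-L) L, u' x = 0 → G (u x) ≤ G m := by
    intro x hx hx0
    have hpx : p x = 0 := by rw [hp]; simp [hx0]
    have hEx : E x = -(2 * G (u x)) := by simp [hE, hpx]
    rcases le_total 0 x with h|h
    · have h1 : E L ≤ E x := hEanti ⟨h, hx.2⟩ (right_mem_Icc.2 hL.le) hx.2
      have hEL : E L = (p L)^2/(a L * b L) - 2 * G m := by simp [hE, huL]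
      have hnn : 0 ≤ (p L)^2/(a L * b L) :=
        div_nonneg (sq_nonneg _) (habpos L (right_mem_Icc.2 hLL.le)).le
      rw [hEL, hEx] at h1
      linarith
    · have h1 : E (-L) ≤ E x := hEmono (left_mem_Icc.2 (by linarith)) ⟨hx.1, h⟩ hx.1
      have hGm : G (-m) = G m := hGeven m
      have hEL : E (-L) = (p (-L))^2/(a (-L) * b (-L)) - 2 * G m := by
        simp [hE, hul, hGm]
      have hnn : 0 ≤ (p (-L))^2/(a (-L) * b (-L)) :=
        div_nonneg (sq_nonneg _) (habpos (-L) (left_mem_Icc.2 hLL.le)).le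
      rw [hEL, hEx] at h1
      linarith
  have hsys : SysPair L a b G' u p := by
    refine ⟨hucont, hpcont, ?_, hpd⟩
    intro y hy
    have h1 : p y / a y = u' y := by
      rw [hp]; field_simp [(hapos y hy).ne']
    rw [h1]
    exact hud y hy
  have hcrit : ∀ x ∈ Icc (-L) L, u' x ≠ 0 := by
    intro x hx hx0
    have hGc := G'_zero_of_min hm hGeven hG hGge (u x) (hstar x hx hx0)
    have hconst : SysPair L a b G' (fun _ => u x) (fun _ => 0) := by
      refine ⟨continuousOn_const, continuousOn_const, ?_, ?_⟩
      · intro y hy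
        rw [show (fun _ : ℝ => (0:ℝ)) y / a y = 0 from by simp]
        exact hasDerivWithinAt_const y _ _
      · intro y hy
        rw [show b y * G' ((fun _ : ℝ => u x) y) = 0 from by simp [hGc]]
        exact hasDerivAt_const y 0
    have hpx : p x = 0 := by rw [hp]; simp [hx0]
    have huni := sys_unique hacont hbcont hapos hbpos haeven hbeven hG'lip hsys hconst
      hx rfl hpx
    have h1 := (huni L (right_mem_Icc.2 hLL.le)).1
    have h2 := (huni (-L) (left_mem_Icc.2 hLL.le)).1
    rw [huL] at h1; rw [hul] at h2
    have h1' : m = u x := h1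
    have h2' : -m = u x := h2
    linarith
  obtain ⟨ξ, hξ, hslope⟩ := exists_hasDerivAt_eq_slope u u' hLL hucont hudAt
  have hξI : ξ ∈ Icc (-L) L := Ioo_subset_Icc_self hξ
  have hξpos : 0 < u' ξ := by
    rw [hslope, hul, huL]
    apply div_pos <;> linarith
  intro x hx
  rcases lt_or_ge 0 (u' x) with h|h
  · exact h
  · exfalso
    have hlt : u' x < 0 := lt_of_le_of_ne h (hcrit x hx)
    have hsub : uIcc x ξ ⊆ Icc (-L) L := by
      intro t ht
      rw [mem_uIcc] at ht
      rcases ht with ⟨h1, h2⟩|⟨h1, h2⟩ <;>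
        exact ⟨by linarith [hx.1, hξI.1], by linarith [hx.2, hξI.2]⟩
    have h0mem : (0:ℝ) ∈ uIcc (u' x) (u' ξ) := by
      rw [mem_uIcc]; left; exact ⟨hlt.le, hξpos.le⟩
    obtain ⟨z, hz, hz0⟩ := intermediate_value_uIcc (hu'c.mono hsub) h0mem
    exact hcrit z (hsub hz) hz0

end Solution

section Inverse
variable {L m : ℝ} {u u' : ℝ → ℝ}

lemma sol_inverse
    (hL : 0 < L) (hm : 0 < m)
    (hud : ∀ x ∈ Icc (-L) L, HasDerivWithinAt u (u' x) (Icc (-L) L) x)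
    (hpos : ∀ x ∈ Icc (-L) L, 0 < u' x)
    (hul : u (-L) = -m) (huL : u L = m) :
    ∃ X : ℝ → ℝ, Continuous X ∧ Monotone X ∧ X (-m) = -L ∧ X m = L ∧
      (∀ s ∈ Icc (-m) m, X s ∈ Icc (-L) L ∧ u (X s) = s) ∧
      (∀ s ∈ Ioo (-m) m, X s ∈ Ioo (-L) L) ∧
      (∀ s ∈ Ioo (-m) m, HasDerivAt X (u' (X s))⁻¹ s) ∧
      (∀ x ∈ Icc (-L) L, X (u x) = x) := by
  have hLL : -L < L := by linarith
  have hucont : ContinuousOn u (Icc (-L) L) := fun x hx => (hud x hx).continuousWithinAt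
  have hum : StrictMonoOn u (Icc (-L) L) := by
    apply strictMonoOn_of_deriv_pos (convex_Icc _ _) hucont
    intro x hx
    rw [interior_Icc] at hx
    rw [((hud x (Ioo_subset_Icc_self hx)).hasDerivAt (Icc_mem_nhds hx.1 hx.2)).deriv]
    exact hpos x (Ioo_subset_Icc_self hx)
  set cl : ℝ → ℝ := fun x => min L (max (-L) x) with hcl
  have hclmem : ∀ x, cl x ∈ Icc (-L) L :=
    fun x => ⟨le_min hLL.le (le_max_left _ _), min_le_left _ _⟩
  have hclid : ∀ x ∈ Icc (-L) L, cl x = x := by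
    intro x hx
    rw [hcl]; simp only
    rw [max_eq_right hx.1, min_eq_right hx.2]
  have hclmono : Monotone cl := fun x y h => min_le_min le_rfl (max_le_max le_rfl h)
  have hclLip : ∀ x y, x ≤ y → cl y - cl x ≤ y - x := by
    intro x y h
    rw [hcl]; simp only [min_def, max_def]
    split_ifs <;> linarith
  set U : ℝ → ℝ := fun x => u (cl x) + (x - cl x) with hU
  have hUagree : ∀ x ∈ Icc (-L) L, U x = u x := by
    intro x hx
    rw [hU]; simp only; rw [hclid x hx]; ring
  have hUmono : StrictMono U := by
    intro x y hxy
    have h1 := hclmono hxy.le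
    have h2 := hclLip x y hxy.le
    rw [hU]; simp only
    rcases eq_or_lt_of_le h1 with he|hlt
    · rw [← he]; linarith
    · have h3 : u (cl x) < u (cl y) := hum (hclmem x) (hclmem y) hlt
      linarith
  have hclcont : Continuous cl := continuous_const.min (continuous_const.max continuous_id)
  have hUcont : Continuous U :=
    (hucont.comp_continuous hclcont fun x => hclmem x).add (continuous_id.sub hclcont)
  have hUtop : Tendsto U atTop atTop := by
    have hev : ∀ᶠ x in atTop, u L + (x - L) = U x := by
      filter_upwards [eventually_ge_atTop L] with x hx
      have hclx : cl x = L := by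
        rw [hcl]; simp only
        rw [max_eq_right (by linarith : -L ≤ x), min_eq_left hx]
      rw [hU]; simp only; rw [hclx]
    have h0 : Tendsto (fun x : ℝ => u L + (x - L)) atTop atTop :=
      tendsto_atTop_add_const_left _ _ (tendsto_atTop_add_const_right _ _ tendsto_id)
    exact h0.congr' hev
  have hUbot : Tendsto U atBot atBot := by
    have hev : ∀ᶠ x in atBot, u (-L) + (x - -L) = U x := by
      filter_upwards [eventually_le_atBot (-L)] with x hx
      have hclx : cl x = -L := by
        rw [hcl]; simp only
        rw [max_eq_left hx, min_eq_right hLL.le]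
      rw [hU]; simp only; rw [hclx]
    have h0 : Tendsto (fun x : ℝ => u (-L) + (x - -L)) atBot atBot :=
      tendsto_atBot_add_const_left _ _ (tendsto_atBot_add_const_right _ _ tendsto_id)
    exact h0.congr' hev
  have hUsurj : Function.Surjective U := Continuous.surjective hUcont hUtop hUbot
  set iso := StrictMono.orderIsoOfSurjective U hUmono hUsurj with hiso
  set X : ℝ → ℝ := fun s => iso.symm s with hX
  have hXcont : Continuous X := iso.symm.continuous
  have hXmono : Monotone X := iso.symm.monotone
  have hUX : ∀ s, U (X s) = s := fun s =>
    StrictMono.orderIsoOfSurjective_self_symm_apply U hUmono hUsurj s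
  have hUml : U (-L) = -m := by rw [hUagree _ (left_mem_Icc.2 hLL.le)]; exact hul
  have hUmL : U L = m := by rw [hUagree _ (right_mem_Icc.2 hLL.le)]; exact huL
  have hXmem' : ∀ s, -m ≤ s → s ≤ m → -L ≤ X s ∧ X s ≤ L := by
    intro s h1 h2
    constructor
    · have : U (-L) ≤ U (X s) := by rw [hUml, hUX]; exact h1
      exact hUmono.le_iff_le.1 this
    · have : U (X s) ≤ U L := by rw [hUmL, hUX]; exact h2
      exact hUmono.le_iff_le.1 this
  have hXI : ∀ s ∈ Icc (-m) m, X s ∈ Icc (-L) L ∧ u (X s) = s := by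
    intro s hs
    obtain ⟨l1, l2⟩ := hXmem' s hs.1 hs.2
    have hmem : X s ∈ Icc (-L) L := ⟨l1, l2⟩
    exact ⟨hmem, by rw [← hUagree _ hmem]; exact hUX s⟩
  have hXm : X (-m) = -L := by
    apply hUmono.injective
    rw [hUX, hUml]
  have hXM : X m = L := by
    apply hUmono.injective
    rw [hUX, hUmL]
  have hXint : ∀ s ∈ Ioo (-m) m, X s ∈ Ioo (-L) L := by
    intro s hs
    obtain ⟨l1, l2⟩ := hXmem' s hs.1.le hs.2.le
    constructor
    · rcases eq_or_lt_of_le l1 with he|h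
      · exfalso
        have : U (X s) = U (-L) := by rw [← he]
        rw [hUX, hUml] at this
        rw [this] at hs
        exact lt_irrefl _ hs.1
      · exact h
    · rcases eq_or_lt_of_le l2 with he|h
      · exfalso
        have : U (X s) = U L := by rw [he]
        rw [hUX, hUmL] at this
        rw [this] at hs
        exact lt_irrefl _ hs.2
      · exact h
  have hXd : ∀ s ∈ Ioo (-m) m, HasDerivAt X (u' (X s))⁻¹ s := by
    intro s hs
    have hxmem := hXint s hs
    have h1 : HasDerivAt u (u' (X s)) (X s) :=
      (hud _ (Ioo_subset_Icc_self hxmem)).hasDerivAt (Icc_mem_nhds hxmem.1 hxmem.2)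
    have hfd : HasDerivAt U (u' (X s)) (X s) := by
      apply h1.congr_of_eventuallyEq
      filter_upwards [Ioo_mem_nhds hxmem.1 hxmem.2] with y hy
      exact hUagree y (Ioo_subset_Icc_self hy)
    exact HasDerivAt.of_local_left_inverse hXcont.continuousAt hfd
      (hpos _ (Ioo_subset_Icc_self hxmem)).ne' (Eventually.of_forall hUX)
  have hXu : ∀ x ∈ Icc (-L) L, X (u x) = x := by
    intro x hx
    apply hUmono.injective
    rw [hUX, hUagree x hx]
  exact ⟨X, hXcont, hXmono, hXm, hXM, hXI, hXint, hXd, hXu⟩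

end Inverse

section Skeleton

/-- The main comparison argument in the "height" variable. -/
lemma skeleton {L m s₀ : ℝ} {a b G' : ℝ → ℝ} {X₁ X₂ q₁ q₂ : ℝ → ℝ}
    (hs₀m : s₀ < m)
    (hacont : ContinuousOn a (Icc (-L) L))
    (hapos : ∀ x ∈ Icc (-L) L, 0 < a x)
    (hX₁c : ContinuousOn X₁ (Icc s₀ m)) (hX₂c : ContinuousOn X₂ (Icc s₀ m))
    (hmaps₁ : MapsTo X₁ (Icc s₀ m) (Icc (-L) L)) (hmaps₂ : MapsTo X₂ (Icc s₀ m) (Icc (-L) L))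
    (hq₁c : ContinuousOn q₁ (Icc s₀ m)) (hq₂c : ContinuousOn q₂ (Icc s₀ m))
    (hq₁pos : ∀ s ∈ Icc s₀ m, 0 < q₁ s) (hq₂pos : ∀ s ∈ Icc s₀ m, 0 < q₂ s)
    (hX₁d : ∀ s ∈ Ioo s₀ m, HasDerivAt X₁ (a (X₁ s) / Real.sqrt (q₁ s)) s)
    (hX₂d : ∀ s ∈ Ioo s₀ m, HasDerivAt X₂ (a (X₂ s) / Real.sqrt (q₂ s)) s)
    (hq₁d : ∀ s ∈ Ioo s₀ m, HasDerivAt q₁ (2 * (a (X₁ s) * b (X₁ s)) * G' s) s)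
    (hq₂d : ∀ s ∈ Ioo s₀ m, HasDerivAt q₂ (2 * (a (X₂ s) * b (X₂ s)) * G' s) s)
    (hstart : X₁ s₀ = X₂ s₀) (hend₁ : X₁ m = L) (hend₂ : X₂ m = L)
    (hq0 : q₂ s₀ < q₁ s₀)
    (H : ∀ s ∈ Ioo s₀ m, X₁ s ≤ X₂ s →
      0 ≤ G' s * (a (X₁ s) * b (X₁ s) - a (X₂ s) * b (X₂ s))) :
    False := by
  set d := fun s => X₂ s - X₁ s with hd
  set Φ := fun s => a (X₂ s) / Real.sqrt (q₂ s) - a (X₁ s) / Real.sqrt (q₁ s) with hΦ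
  have hs₀I : s₀ ∈ Icc s₀ m := left_mem_Icc.2 hs₀m.le
  have hdc : ContinuousOn d (Icc s₀ m) := hX₂c.sub hX₁c
  have hΦc : ContinuousOn Φ (Icc s₀ m) := by
    apply ContinuousOn.sub
    · exact (hacont.comp hX₂c hmaps₂).div (Real.continuous_sqrt.comp_continuousOn hq₂c)
        (fun s hs => (Real.sqrt_pos.2 (hq₂pos s hs)).ne')
    · exact (hacont.comp hX₁c hmaps₁).div (Real.continuous_sqrt.comp_continuousOn hq₁c)
        (fun s hs => (Real.sqrt_pos.2 (hq₁pos s hs)).ne')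
  have hdd : ∀ s ∈ Ioo s₀ m, HasDerivAt d (Φ s) s := fun s hs =>
    (hX₂d s hs).sub (hX₁d s hs)
  have hΦpos : ∀ s ∈ Icc s₀ m, X₁ s = X₂ s → q₂ s < q₁ s → 0 < Φ s := by
    intro s hs he hq
    rw [hΦ]; simp only; rw [← he]
    have ha' := hapos _ (hmaps₁ hs)
    have h1 : Real.sqrt (q₂ s) < Real.sqrt (q₁ s) := Real.sqrt_lt_sqrt (hq₂pos s hs).le hq
    have h2 : 0 < Real.sqrt (q₂ s) := Real.sqrt_pos.2 (hq₂pos s hs)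
    exact sub_pos.2 (div_lt_div_of_pos_left ha' h2 h1)
  have hstep : ∀ α β, s₀ ≤ α → α < β → β ≤ m → (∀ s ∈ Icc α β, 0 < Φ s) → d α < d β := by
    intro α β h1 h2 h3 hpos'
    have hmono : StrictMonoOn d (Icc α β) := by
      apply strictMonoOn_of_deriv_pos (convex_Icc _ _) (hdc.mono (Icc_subset_Icc h1 h3))
      intro x hx
      rw [interior_Icc] at hx
      have hxm : x ∈ Ioo s₀ m := ⟨lt_of_le_of_lt h1 hx.1, lt_of_lt_of_le hx.2 h3⟩
      rw [(hdd x hxm).deriv]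
      exact hpos' x (Ioo_subset_Icc_self hx)
    exact hmono (left_mem_Icc.2 h2.le) (right_mem_Icc.2 h2.le) h2
  have hds₀ : d s₀ = 0 := by rw [hd]; simp [hstart]
  have hΦ0 : 0 < Φ s₀ := hΦpos s₀ hs₀I hstart hq0
  have hmem : Φ ⁻¹' (Ioi 0) ∈ 𝓝[Icc s₀ m] s₀ := (hΦc s₀ hs₀I) (isOpen_Ioi.mem_nhds hΦ0)
  rw [nhdsWithin_Icc_eq_nhdsGE hs₀m, mem_nhdsGE_iff_exists_Icc_subset] at hmem
  obtain ⟨σ', hσ'gt, hσ'sub⟩ := hmem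
  set σ := min σ' m with hσdef
  have hs₀σ : s₀ < σ := lt_min hσ'gt hs₀m
  have hσm : σ ≤ m := min_le_right _ _
  have hΦσ : ∀ s ∈ Icc s₀ σ, 0 < Φ s := fun s hs =>
    hσ'sub ⟨hs.1, le_trans hs.2 (min_le_left _ _)⟩
  have hdσ : 0 < d σ := by
    have := hstep s₀ σ le_rfl hs₀σ hσm hΦσ
    linarith
  have hdm : d m = 0 := by rw [hd]; simp [hend₁, hend₂]
  have hσltm : σ < m := by
    rcases eq_or_lt_of_le hσm with he|h
    · exfalso; rw [he] at hdσ; linarith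
    · exact h
  set Z := {s | s ∈ Icc σ m ∧ d s = 0} with hZ
  have hZne : Z.Nonempty := ⟨m, ⟨⟨hσm, le_rfl⟩, hdm⟩⟩
  have hZclosed : IsClosed Z := by
    have hdc' : ContinuousOn d (Icc σ m) := hdc.mono (Icc_subset_Icc hs₀σ.le le_rfl)
    have he : Z = Icc σ m ∩ d ⁻¹' {0} := by ext s; simp [hZ]
    rw [he]
    exact hdc'.preimage_isClosed_of_isClosed isClosed_Icc isClosed_singleton
  have hZbdd : BddBelow Z := ⟨σ, fun s hs => hs.1.1⟩
  set s' := sInf Z with hs'def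
  have hs'Z : s' ∈ Z := hZclosed.csInf_mem hZne hZbdd
  have hs'm : s' ≤ m := hs'Z.1.2
  have hs'0 : d s' = 0 := hs'Z.2
  have hs'σ : σ < s' := by
    rcases eq_or_lt_of_le hs'Z.1.1 with he|h
    · exfalso; rw [he] at hdσ; rw [hs'0] at hdσ; exact lt_irrefl _ hdσ
    · exact h
  have hdpos : ∀ t ∈ Ico σ s', 0 < d t := by
    intro t ht
    by_contra hc
    push_neg at hc
    rcases eq_or_lt_of_le hc with he|hlt'
    · have htZ : t ∈ Z := ⟨⟨ht.1, le_trans ht.2.le hs'm⟩, he⟩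
      have := csInf_le hZbdd htZ
      linarith [ht.2]
    · have hσt : σ ≤ t := ht.1
      have hsub : Icc σ t ⊆ Icc s₀ m :=
        Icc_subset_Icc hs₀σ.le (le_trans ht.2.le hs'm)
      have hcd : ContinuousOn d (uIcc σ t) := by
        rw [uIcc_of_le hσt]; exact hdc.mono hsub
      have h0mem : (0:ℝ) ∈ uIcc (d σ) (d t) := by
        rw [mem_uIcc]; right; exact ⟨hlt'.le, hdσ.le⟩
      obtain ⟨z, hz, hz0⟩ := intermediate_value_uIcc hcd h0mem
      rw [uIcc_of_le hσt] at hz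
      have hzZ : z ∈ Z := ⟨⟨hz.1, le_trans hz.2 (le_trans ht.2.le hs'm)⟩, hz0⟩
      have := csInf_le hZbdd hzZ
      have : s' ≤ z := this
      linarith [hz.2, ht.2]
  have hXle : ∀ s ∈ Icc s₀ s', X₁ s ≤ X₂ s := by
    intro s hs
    have hge : 0 ≤ d s := by
      rcases lt_or_ge s σ with h|h
      · rcases eq_or_lt_of_le hs.1 with he|hgt
        · rw [← he, hds₀]
        · have := hstep s₀ s le_rfl hgt (le_trans h.le hσm)
            (fun t ht => hΦσ t ⟨ht.1, le_trans ht.2 h.le⟩)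
          linarith
      · rcases eq_or_lt_of_le hs.2 with he|h2
        · rw [he, hs'0]
        · exact (hdpos s ⟨h, h2⟩).le
    have : 0 ≤ X₂ s - X₁ s := hge
    linarith
  have hqm : MonotoneOn (fun s => q₁ s - q₂ s) (Icc s₀ s') := by
    apply monotoneOn_of_deriv_nonneg (convex_Icc _ _)
      ((hq₁c.sub hq₂c).mono (Icc_subset_Icc le_rfl hs'm))
    · intro x hx; rw [interior_Icc] at hx
      have hxm : x ∈ Ioo s₀ m := ⟨hx.1, lt_of_lt_of_le hx.2 hs'm⟩
      exact ((hq₁d x hxm).sub (hq₂d x hxm)).differentiableAt.differentiableWithinAt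
    · intro x hx; rw [interior_Icc] at hx
      have hxm : x ∈ Ioo s₀ m := ⟨hx.1, lt_of_lt_of_le hx.2 hs'm⟩
      rw [((hq₁d x hxm).sub (hq₂d x hxm)).deriv]
      have hHx := H x hxm (hXle x ⟨hx.1.le, hx.2.le⟩)
      nlinarith [hHx]
  have hs₀s' : s₀ < s' := lt_trans hs₀σ hs'σ
  have hqs' : q₂ s' < q₁ s' := by
    have h1 := hqm (left_mem_Icc.2 hs₀s'.le) (right_mem_Icc.2 hs₀s'.le) hs₀s'.le
    simp only at h1
    linarith
  have hX₁s' : X₁ s' = X₂ s' := by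
    have h0 : X₂ s' - X₁ s' = 0 := hs'0
    linarith
  have hs'I : s' ∈ Icc s₀ m := ⟨hs₀s'.le, hs'm⟩
  have hΦs' : 0 < Φ s' := hΦpos s' hs'I hX₁s' hqs'
  have hmem2 : Φ ⁻¹' (Ioi 0) ∈ 𝓝[Icc s₀ m] s' := (hΦc s' hs'I) (isOpen_Ioi.mem_nhds hΦs')
  have hle : 𝓝[Icc s₀ s'] s' ≤ 𝓝[Icc s₀ m] s' :=
    nhdsWithin_mono _ (Icc_subset_Icc le_rfl hs'm)
  have hmem3 : Φ ⁻¹' (Ioi 0) ∈ 𝓝[Icc s₀ s'] s' := hle hmem2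
  rw [nhdsWithin_Icc_eq_nhdsLE hs₀s', mem_nhdsLE_iff_exists_Icc_subset] at hmem3
  obtain ⟨t', ht'lt, ht'sub⟩ := hmem3
  set t₀ := max t' σ with ht₀def
  have ht₀lt : t₀ < s' := max_lt ht'lt hs'σ
  have hΦt₀ : ∀ s ∈ Icc t₀ s', 0 < Φ s := fun s hs =>
    ht'sub ⟨le_trans (le_max_left _ _) hs.1, hs.2⟩
  have hd0 : d t₀ < d s' :=
    hstep t₀ s' (le_trans hs₀σ.le (le_max_right _ _)) ht₀lt hs'm hΦt₀
  have hdt₀ : 0 < d t₀ := hdpos t₀ ⟨le_max_right _ _, ht₀lt⟩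
  rw [hs'0] at hd0
  linarith

end Skeleton

section OddPart
variable {L m : ℝ} {a b ab' G G' : ℝ → ℝ} {u u' : ℝ → ℝ}

lemma sol_inverse'
    (hL : 0 < L) (hm : 0 < m)
    (hacont : ContinuousOn a (Icc (-L) L))
    (hapos : ∀ x ∈ Icc (-L) L, 0 < a x) (hbpos : ∀ x ∈ Icc (-L) L, 0 < b x)
    (hud : ∀ x ∈ Icc (-L) L, HasDerivWithinAt u (u' x) (Icc (-L) L) x)
    (hpd : ∀ x ∈ Ioo (-L) L, HasDerivAt (fun y => a y * u' y) (b x * G' (u x)) x)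
    (hpos : ∀ x ∈ Icc (-L) L, 0 < u' x)
    (hul : u (-L) = -m) (huL : u L = m) :
    ∃ X : ℝ → ℝ, Continuous X ∧ Monotone X ∧ X (-m) = -L ∧ X m = L ∧
      (∀ s ∈ Icc (-m) m, X s ∈ Icc (-L) L ∧ u (X s) = s) ∧
      (∀ s ∈ Ioo (-m) m, X s ∈ Ioo (-L) L) ∧
      (∀ x ∈ Icc (-L) L, X (u x) = x) ∧
      (∀ s ∈ Ioo (-m) m,
        HasDerivAt X (a (X s) / Real.sqrt ((a (X s) * u' (X s))^2)) s) ∧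
      (∀ s ∈ Ioo (-m) m,
        HasDerivAt (fun t => (a (X t) * u' (X t))^2) (2 * (a (X s) * b (X s)) * G' s) s) := by
  obtain ⟨X, hXc, hXmono, hXm, hXM, hXI, hXint, hXd, hXu⟩ :=
    sol_inverse hL hm hud hpos hul huL
  have key : ∀ s ∈ Ioo (-m) m,
      (HasDerivAt X (a (X s) / Real.sqrt ((a (X s) * u' (X s))^2)) s ∧
      HasDerivAt (fun t => (a (X t) * u' (X t))^2) (2 * (a (X s) * b (X s)) * G' s) s) := by
    intro s hs
    have hxIoo : X s ∈ Ioo (-L) L := hXint s hs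
    have hxI : X s ∈ Icc (-L) L := Ioo_subset_Icc_self hxIoo
    have hu'x : 0 < u' (X s) := hpos _ hxI
    have hax : 0 < a (X s) := hapos _ hxI
    have hsqrt : Real.sqrt ((a (X s) * u' (X s))^2) = a (X s) * u' (X s) :=
      Real.sqrt_sq (by positivity)
    have hXd' := hXd s hs
    have hXds : HasDerivAt X (a (X s) / Real.sqrt ((a (X s) * u' (X s))^2)) s := by
      convert hXd' using 1
      rw [hsqrt]
      field_simp
    refine ⟨hXds, ?_⟩
    have hp2 : HasDerivAt (fun y => (a y * u' y)^2)
        (2 * (a (X s) * u' (X s)) * (b (X s) * G' (u (X s)))) (X s) := by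
      have := (hpd (X s) hxIoo).pow 2
      refine this.congr_deriv ?_
      push_cast; ring
    have hcomp := hp2.comp s hXd'
    have huXs : u (X s) = s := (hXI s (Ioo_subset_Icc_self hs)).2
    refine hcomp.congr_deriv ?_
    rw [huXs]
    field_simp
  exact ⟨X, hXc, hXmono, hXm, hXM, hXI, hXint, hXu,
    fun s hs => (key s hs).1, fun s hs => (key s hs).2⟩

lemma ab_abs_mono
    (hL : 0 < L)
    (hacont : ContinuousOn a (Icc (-L) L)) (hbcont : ContinuousOn b (Icc (-L) L))
    (haeven : ∀ x, a (-x) = a x) (hbeven : ∀ x, b (-x) = b x)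
    (hab : ∀ x ∈ Icc (-L) L,
      HasDerivWithinAt (fun y => a y * b y) (ab' x) (Icc (-L) L) x)
    (habmono : ∀ x ∈ Ioo (0:ℝ) L, 0 ≤ ab' x) :
    ∀ y ∈ Icc (-L) L, ∀ z ∈ Icc (-L) L, |y| ≤ |z| → a y * b y ≤ a z * b z := by
  have hmono : MonotoneOn (fun x => a x * b x) (Icc 0 L) := by
    apply monotoneOn_of_deriv_nonneg (convex_Icc _ _)
      ((hacont.mul hbcont).mono (Icc_subset_Icc (by linarith) le_rfl))
    · intro x hx; rw [interior_Icc] at hx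
      have hxIoo : x ∈ Ioo (-L) L := ⟨by linarith [hx.1], hx.2⟩
      exact ((hab x (Ioo_subset_Icc_self hxIoo)).hasDerivAt
        (Icc_mem_nhds hxIoo.1 hxIoo.2)).differentiableAt.differentiableWithinAt
    · intro x hx; rw [interior_Icc] at hx
      have hxIoo : x ∈ Ioo (-L) L := ⟨by linarith [hx.1], hx.2⟩
      rw [show a * b = (fun y => a y * b y) from rfl, ((hab x (Ioo_subset_Icc_self hxIoo)).hasDerivAt
        (Icc_mem_nhds hxIoo.1 hxIoo.2)).deriv]
      exact habmono x hx
  have habs : ∀ y ∈ Icc (-L) L, a |y| * b |y| = a y * b y := by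
    intro y _
    rcases le_or_gt 0 y with h|h
    · rw [abs_of_nonneg h]
    · rw [abs_of_neg h, haeven, hbeven]
  intro y hy z hz hyz
  have hym : |y| ∈ Icc (0:ℝ) L := ⟨abs_nonneg _, abs_le.2 ⟨hy.1, hy.2⟩⟩
  have hzm : |z| ∈ Icc (0:ℝ) L := ⟨abs_nonneg _, abs_le.2 ⟨hz.1, hz.2⟩⟩
  have h2 : a |y| * b |y| ≤ a |z| * b |z| := hmono hym hzm hyz
  rw [habs y hy, habs z hz] at h2
  exact h2

end OddPart

section Odd
variable {L m : ℝ} {a b ab' G G' : ℝ → ℝ} {u u' : ℝ → ℝ}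

lemma sol_odd
    (hL : 0 < L) (hm : 0 < m)
    (hacont : ContinuousOn a (Icc (-L) L)) (hbcont : ContinuousOn b (Icc (-L) L))
    (hapos : ∀ x ∈ Icc (-L) L, 0 < a x) (hbpos : ∀ x ∈ Icc (-L) L, 0 < b x)
    (haeven : ∀ x, a (-x) = a x) (hbeven : ∀ x, b (-x) = b x)
    (hGeven : ∀ s, G (-s) = G s)
    (hG : ∀ s, HasDerivAt G (G' s) s) (hG'lip : LocallyLipschitz G')
    (hab : ∀ x ∈ Icc (-L) L,
      HasDerivWithinAt (fun y => a y * b y) (ab' x) (Icc (-L) L) x)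
    (habmono : ∀ x ∈ Ioo (0:ℝ) L, 0 ≤ ab' x)
    (hGge : ∀ s > (0:ℝ), G m ≤ G s)
    (hG'le : ∀ s ∈ Ioo (0:ℝ) m, G' s ≤ 0)
    (hud : ∀ x ∈ Icc (-L) L, HasDerivWithinAt u (u' x) (Icc (-L) L) x)
    (hu'c : ContinuousOn u' (Icc (-L) L))
    (hpd : ∀ x ∈ Ioo (-L) L, HasDerivAt (fun y => a y * u' y) (b x * G' (u x)) x)
    (hul : u (-L) = -m) (huL : u L = m) :
    ∀ x ∈ Icc (-L) L, u (-x) = -u x := by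
  have hLL : -L < L := by linarith
  have hmm : -m < m := by linarith
  have hG'odd := G'_odd hGeven hG
  have hpos := sol_deriv_pos hL hm hacont hbcont hapos hbpos haeven hbeven hGeven hG
    hG'lip hab habmono hGge hud hu'c hpd hul huL
  set p : ℝ → ℝ := fun x => a x * u' x with hp
  have hppos : ∀ x ∈ Icc (-L) L, 0 < p x := fun x hx => mul_pos (hapos x hx) (hpos x hx)
  have hpcont : ContinuousOn p (Icc (-L) L) := hacont.mul hu'c
  have hucont : ContinuousOn u (Icc (-L) L) := fun x hx => (hud x hx).continuousWithinAt
  obtain ⟨Y, hYc, hYmono, hYm, hYM, hYI, hYint, hYu, hYd, hqd⟩ :=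
    sol_inverse' hL hm hacont hapos hbpos hud hpd hpos hul huL
  have abM := ab_abs_mono hL hacont hbcont haeven hbeven hab habmono
  set q : ℝ → ℝ := fun t => (a (Y t) * u' (Y t))^2 with hq
  set XR : ℝ → ℝ := fun s => -Y (-s) with hXR
  set qR : ℝ → ℝ := fun s => q (-s) with hqR
  have hnegm : ∀ s ∈ Icc (-m) m, -s ∈ Icc (-m) m := fun s hs =>
    ⟨by linarith [hs.2], by linarith [hs.1]⟩
  have hnegm' : ∀ s ∈ Ioo (-m) m, -s ∈ Ioo (-m) m := fun s hs =>
    ⟨by linarith [hs.2], by linarith [hs.1]⟩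
  have hYmaps : MapsTo Y (Icc (-m) m) (Icc (-L) L) := fun s hs => (hYI s hs).1
  have hqc : ContinuousOn q (Icc (-m) m) := by
    have h1 : ContinuousOn (fun t => a (Y t) * u' (Y t)) (Icc (-m) m) :=
      hpcont.comp hYc.continuousOn hYmaps
    exact h1.pow 2
  have hqpos : ∀ s ∈ Icc (-m) m, 0 < q s := by
    intro s hs
    have h1 := hppos (Y s) (hYI s hs).1
    have : 0 < a (Y s) * u' (Y s) := h1
    positivity
  have hqRc : ContinuousOn qR (Icc (-m) m) :=
    hqc.comp continuous_neg.continuousOn (fun s hs => hnegm s hs)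
  have hqRpos : ∀ s ∈ Icc (-m) m, 0 < qR s := fun s hs => hqpos (-s) (hnegm s hs)
  have hXRc : Continuous XR := (hYc.comp continuous_neg).neg
  have hXRmaps : MapsTo XR (Icc (-m) m) (Icc (-L) L) := by
    intro s hs
    have h1 := (hYI (-s) (hnegm s hs)).1
    rw [hXR]
    exact ⟨by simp only; linarith [h1.2], by simp only; linarith [h1.1]⟩
  have hYd' : ∀ s ∈ Ioo (-m) m, HasDerivAt Y (a (Y s) / Real.sqrt (q s)) s :=
    fun s hs => hYd s hs
  have hqd' : ∀ s ∈ Ioo (-m) m, HasDerivAt q (2 * (a (Y s) * b (Y s)) * G' s) s :=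
    fun s hs => hqd s hs
  have hXRd : ∀ s ∈ Ioo (-m) m, HasDerivAt XR (a (XR s) / Real.sqrt (qR s)) s := by
    intro s hs
    have hns := hnegm' s hs
    have h1 := hYd' (-s) hns
    have h2 : HasDerivAt (fun s : ℝ => Y (-s)) (a (Y (-s)) / Real.sqrt (q (-s)) * (-1)) s :=
      h1.comp s (hasDerivAt_neg s)
    have h3 := h2.neg
    refine h3.congr_deriv ?_
    rw [hXR]; simp only
    rw [haeven (Y (-s))]
    rw [hqR]
    ring
  have hqRd : ∀ s ∈ Ioo (-m) m, HasDerivAt qR (2 * (a (XR s) * b (XR s)) * G' s) s := by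
    intro s hs
    have hns := hnegm' s hs
    have h1 := hqd' (-s) hns
    have h2 : HasDerivAt (fun s : ℝ => q (-s))
        (2 * (a (Y (-s)) * b (Y (-s))) * G' (-s) * (-1)) s := h1.comp s (hasDerivAt_neg s)
    convert h2 using 1
    rw [hXR]; simp only
    rw [haeven (Y (-s)), hbeven (Y (-s)), hG'odd s]
    ring
  have hXRm : XR (-m) = -L := by rw [hXR]; simp only [neg_neg]; rw [hYM]
  have hXRM : XR m = L := by rw [hXR]; simp only; rw [hYm, neg_neg]
  -- The sign hypotheses for the comparison lemma, in both orders.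
  have H₁ : ∀ s ∈ Ioo (-m) m, Y s ≤ XR s →
      0 ≤ G' s * (a (Y s) * b (Y s) - a (XR s) * b (XR s)) := by
    intro s hs hle
    have hsI := Ioo_subset_Icc_self hs
    have hAI : Y s ∈ Icc (-L) L := (hYI s hsI).1
    have hBI : Y (-s) ∈ Icc (-L) L := (hYI (-s) (hnegm s hsI)).1
    have habeq : a (XR s) * b (XR s) = a (Y (-s)) * b (Y (-s)) := by
      rw [hXR]; simp only; rw [haeven, hbeven]
    rw [habeq]
    have hsum : Y s + Y (-s) ≤ 0 := by
      have h0 : Y s ≤ -Y (-s) := hle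
      linarith
    rcases lt_trichotomy s 0 with hneg|h0|hposs
    · have hG'ge : 0 ≤ G' s := by
        have h1 := hG'le (-s) ⟨by linarith, by linarith [hs.1]⟩
        have h2 := hG'odd s
        linarith
      have hAB : Y s ≤ Y (-s) := hYmono (by linarith : s ≤ -s)
      have habs : |Y (-s)| ≤ |Y s| := by
        rcases le_or_gt (Y (-s)) 0 with h|h
        · rw [abs_of_nonpos h, abs_of_nonpos (by linarith : Y s ≤ 0)]; linarith
        · rw [abs_of_pos h, abs_of_nonpos (by linarith : Y s ≤ 0)]; linarith
      have := abM (Y (-s)) hBI (Y s) hAI habs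
      apply mul_nonneg hG'ge; linarith
    · have h2 := hG'odd 0
      rw [neg_zero] at h2
      have h3 : G' 0 = 0 := by linarith
      rw [h0, h3]; simp
    · have hG'np : G' s ≤ 0 := hG'le s ⟨hposs, hs.2⟩
      have hBA : Y (-s) ≤ Y s := hYmono (by linarith : -s ≤ s)
      have habs : |Y s| ≤ |Y (-s)| := by
        rcases le_or_gt 0 (Y s) with h|h
        · rw [abs_of_nonneg h, abs_of_nonpos (by linarith : Y (-s) ≤ 0)]; linarith
        · rw [abs_of_neg h, abs_of_nonpos (by linarith : Y (-s) ≤ 0)]; linarith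
      have h5 := abM (Y s) hAI (Y (-s)) hBI habs
      have h6 : a (Y s) * b (Y s) - a (Y (-s)) * b (Y (-s)) ≤ 0 := by linarith
      nlinarith [mul_nonneg (neg_nonneg.2 hG'np) (neg_nonneg.2 h6)]
  have H₂ : ∀ s ∈ Ioo (-m) m, XR s ≤ Y s →
      0 ≤ G' s * (a (XR s) * b (XR s) - a (Y s) * b (Y s)) := by
    intro s hs hle
    have hsI := Ioo_subset_Icc_self hs
    have hAI : Y s ∈ Icc (-L) L := (hYI s hsI).1
    have hBI : Y (-s) ∈ Icc (-L) L := (hYI (-s) (hnegm s hsI)).1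
    have habeq : a (XR s) * b (XR s) = a (Y (-s)) * b (Y (-s)) := by
      rw [hXR]; simp only; rw [haeven, hbeven]
    rw [habeq]
    have hsum : 0 ≤ Y s + Y (-s) := by
      have h0 : -Y (-s) ≤ Y s := hle
      linarith
    rcases lt_trichotomy s 0 with hneg|h0|hposs
    · have hG'ge : 0 ≤ G' s := by
        have h1 := hG'le (-s) ⟨by linarith, by linarith [hs.1]⟩
        have h2 := hG'odd s
        linarith
      have hAB : Y s ≤ Y (-s) := hYmono (by linarith : s ≤ -s)
      have habs : |Y s| ≤ |Y (-s)| := by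
        rcases le_or_gt 0 (Y s) with h|h
        · rw [abs_of_nonneg h, abs_of_nonneg (by linarith : (0:ℝ) ≤ Y (-s))]; linarith
        · rw [abs_of_neg h, abs_of_nonneg (by linarith : (0:ℝ) ≤ Y (-s))]; linarith
      have := abM (Y s) hAI (Y (-s)) hBI habs
      apply mul_nonneg hG'ge; linarith
    · have h2 := hG'odd 0
      rw [neg_zero] at h2
      have h3 : G' 0 = 0 := by linarith
      rw [h0, h3]; simp
    · have hG'np : G' s ≤ 0 := hG'le s ⟨hposs, hs.2⟩
      have hBA : Y (-s) ≤ Y s := hYmono (by linarith : -s ≤ s)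
      have habs : |Y (-s)| ≤ |Y s| := by
        rcases le_or_gt (Y (-s)) 0 with h|h
        · rw [abs_of_nonpos h, abs_of_nonneg (by linarith : (0:ℝ) ≤ Y s)]; linarith
        · rw [abs_of_pos h, abs_of_nonneg (by linarith : (0:ℝ) ≤ Y s)]; linarith
      have h5 := abM (Y (-s)) hBI (Y s) hAI habs
      have h6 : a (Y (-s)) * b (Y (-s)) - a (Y s) * b (Y s) ≤ 0 := by linarith
      nlinarith [mul_nonneg (neg_nonneg.2 hG'np) (neg_nonneg.2 h6)]
  have hqmm : q (-m) = (a (-L) * u' (-L))^2 := by rw [hq]; simp only; rw [hYm]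
  have hqmM : q m = (a L * u' L)^2 := by rw [hq]; simp only; rw [hYM]
  have hqRmm : qR (-m) = (a L * u' L)^2 := by rw [hqR]; simp only [neg_neg]; exact hqmM
  have hqRmM : qR m = (a (-L) * u' (-L))^2 := by rw [hqR]; simp only; exact hqmm
  have hpmL : 0 < a (-L) * u' (-L) := hppos (-L) (left_mem_Icc.2 hLL.le)
  have hpL : 0 < a L * u' L := hppos L (right_mem_Icc.2 hLL.le)
  have hstart1 : Y (-m) = XR (-m) := by rw [hYm, hXRm]
  rcases lt_trichotomy (a L * u' L) (a (-L) * u' (-L)) with hlt|heq|hgt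
  · exfalso
    have hq0 : qR (-m) < q (-m) := by
      rw [hqRmm, hqmm]; nlinarith
    exact skeleton hmm hacont hapos hYc.continuousOn hXRc.continuousOn hYmaps hXRmaps
      hqc hqRc hqpos hqRpos hYd' hXRd hqd' hqRd hstart1 hYM hXRM hq0 H₁
  · -- equal endpoint slopes: compare with the reflected solution directly
    have hsys : SysPair L a b G' u p := by
      refine ⟨hucont, hpcont, ?_, hpd⟩
      intro y hy
      rw [show p y / a y = u' y from by rw [hp]; field_simp [(hapos y hy).ne']]
      exact hud y hy
    have hv0 := sysPair_neg hG'odd (sysPair_reflect haeven hbeven hsys)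
    have hv : SysPair L a b G' (fun x => -u (-x)) (fun x => p (-x)) := by
      simpa only [neg_neg] using hv0
    have h1 : u (-L) = (fun x : ℝ => -u (-x)) (-L) := by
      simp only [neg_neg]
      rw [huL, hul]
    have h2 : p (-L) = (fun x : ℝ => p (-x)) (-L) := by
      simp only [neg_neg]
      exact heq.symm
    have huni := sys_unique hacont hbcont hapos hbpos haeven hbeven hG'lip hsys hv
      (left_mem_Icc.2 hLL.le) h1 h2
    intro x hx
    have hnx : -x ∈ Icc (-L) L := ⟨by linarith [hx.2], by linarith [hx.1]⟩
    have h3 := (huni (-x) hnx).1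
    simpa using h3
  · exfalso
    have hq0 : q (-m) < qR (-m) := by
      rw [hqRmm, hqmm]; nlinarith
    have hstart2 : XR (-m) = Y (-m) := hstart1.symm
    exact skeleton hmm hacont hapos hXRc.continuousOn hYc.continuousOn hXRmaps hYmaps
      hqRc hqc hqRpos hqpos hXRd hYd' hqRd hqd' hstart2 hXRM hYM hq0 H₂

end Odd

section Unique
variable {L m : ℝ} {a b ab' G G' : ℝ → ℝ}

lemma sol_eqOn
    (hL : 0 < L) (hm : 0 < m)
    (hacont : ContinuousOn a (Icc (-L) L)) (hbcont : ContinuousOn b (Icc (-L) L))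
    (hapos : ∀ x ∈ Icc (-L) L, 0 < a x) (hbpos : ∀ x ∈ Icc (-L) L, 0 < b x)
    (haeven : ∀ x, a (-x) = a x) (hbeven : ∀ x, b (-x) = b x)
    (hGeven : ∀ s, G (-s) = G s)
    (hG : ∀ s, HasDerivAt G (G' s) s) (hG'lip : LocallyLipschitz G')
    (hab : ∀ x ∈ Icc (-L) L,
      HasDerivWithinAt (fun y => a y * b y) (ab' x) (Icc (-L) L) x)
    (habmono : ∀ x ∈ Ioo (0:ℝ) L, 0 ≤ ab' x)
    (hGge : ∀ s > (0:ℝ), G m ≤ G s)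
    (hG'le : ∀ s ∈ Ioo (0:ℝ) m, G' s ≤ 0)
    {u₁ u₁' u₂ u₂' : ℝ → ℝ}
    (hud₁ : ∀ x ∈ Icc (-L) L, HasDerivWithinAt u₁ (u₁' x) (Icc (-L) L) x)
    (hu'c₁ : ContinuousOn u₁' (Icc (-L) L))
    (hpd₁ : ∀ x ∈ Ioo (-L) L, HasDerivAt (fun y => a y * u₁' y) (b x * G' (u₁ x)) x)
    (hul₁ : u₁ (-L) = -m) (huL₁ : u₁ L = m)
    (hud₂ : ∀ x ∈ Icc (-L) L, HasDerivWithinAt u₂ (u₂' x) (Icc (-L) L) x)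
    (hu'c₂ : ContinuousOn u₂' (Icc (-L) L))
    (hpd₂ : ∀ x ∈ Ioo (-L) L, HasDerivAt (fun y => a y * u₂' y) (b x * G' (u₂ x)) x)
    (hul₂ : u₂ (-L) = -m) (huL₂ : u₂ L = m) :
    ∀ x ∈ Icc (-L) L, u₁ x = u₂ x := by
  have hLL : -L < L := by linarith
  have habM := ab_abs_mono hL hacont hbcont haeven hbeven hab habmono
  have hodd₁ := sol_odd hL hm hacont hbcont hapos hbpos haeven hbeven hGeven hG hG'lip
    hab habmono hGge hG'le hud₁ hu'c₁ hpd₁ hul₁ huL₁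
  have hodd₂ := sol_odd hL hm hacont hbcont hapos hbpos haeven hbeven hGeven hG hG'lip
    hab habmono hGge hG'le hud₂ hu'c₂ hpd₂ hul₂ huL₂
  have hpos₁ := sol_deriv_pos hL hm hacont hbcont hapos hbpos haeven hbeven hGeven hG
    hG'lip hab habmono hGge hud₁ hu'c₁ hpd₁ hul₁ huL₁
  have hpos₂ := sol_deriv_pos hL hm hacont hbcont hapos hbpos haeven hbeven hGeven hG
    hG'lip hab habmono hGge hud₂ hu'c₂ hpd₂ hul₂ huL₂
  have h0I : (0:ℝ) ∈ Icc (-L) L := ⟨by linarith, by linarith⟩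
  have hu₁0 : u₁ 0 = 0 := by
    have := hodd₁ 0 h0I
    rw [neg_zero] at this
    linarith
  have hu₂0 : u₂ 0 = 0 := by
    have := hodd₂ 0 h0I
    rw [neg_zero] at this
    linarith
  obtain ⟨X₁, hX₁c, hX₁mono, hX₁m, hX₁M, hX₁I, hX₁int, hX₁u, hX₁d, hq₁d⟩ :=
    sol_inverse' hL hm hacont hapos hbpos hud₁ hpd₁ hpos₁ hul₁ huL₁
  obtain ⟨X₂, hX₂c, hX₂mono, hX₂m, hX₂M, hX₂I, hX₂int, hX₂u, hX₂d, hq₂d⟩ :=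
    sol_inverse' hL hm hacont hapos hbpos hud₂ hpd₂ hpos₂ hul₂ huL₂
  have hX₁0 : X₁ 0 = 0 := by
    have := hX₁u 0 h0I
    rw [hu₁0] at this
    exact this
  have hX₂0 : X₂ 0 = 0 := by
    have := hX₂u 0 h0I
    rw [hu₂0] at this
    exact this
  set q₁ : ℝ → ℝ := fun t => (a (X₁ t) * u₁' (X₁ t))^2 with hq₁
  set q₂ : ℝ → ℝ := fun t => (a (X₂ t) * u₂' (X₂ t))^2 with hq₂
  have hsub : Icc (0:ℝ) m ⊆ Icc (-m) m := Icc_subset_Icc (by linarith) le_rfl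
  have hsub' : Ioo (0:ℝ) m ⊆ Ioo (-m) m := Ioo_subset_Ioo (by linarith) le_rfl
  have hmaps₁ : MapsTo X₁ (Icc 0 m) (Icc (-L) L) := fun s hs => (hX₁I s (hsub hs)).1
  have hmaps₂ : MapsTo X₂ (Icc 0 m) (Icc (-L) L) := fun s hs => (hX₂I s (hsub hs)).1
  have hq₁c : ContinuousOn q₁ (Icc 0 m) := by
    have h1 : ContinuousOn (fun t => a (X₁ t) * u₁' (X₁ t)) (Icc 0 m) :=
      ((hacont.mul hu'c₁).comp hX₁c.continuousOn hmaps₁)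
    exact h1.pow 2
  have hq₂c : ContinuousOn q₂ (Icc 0 m) := by
    have h1 : ContinuousOn (fun t => a (X₂ t) * u₂' (X₂ t)) (Icc 0 m) :=
      ((hacont.mul hu'c₂).comp hX₂c.continuousOn hmaps₂)
    exact h1.pow 2
  have hq₁pos : ∀ s ∈ Icc (0:ℝ) m, 0 < q₁ s := by
    intro s hs
    have h1 : 0 < a (X₁ s) * u₁' (X₁ s) :=
      mul_pos (hapos _ (hmaps₁ hs)) (hpos₁ _ (hmaps₁ hs))
    positivity
  have hq₂pos : ∀ s ∈ Icc (0:ℝ) m, 0 < q₂ s := by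
    intro s hs
    have h1 : 0 < a (X₂ s) * u₂' (X₂ s) :=
      mul_pos (hapos _ (hmaps₂ hs)) (hpos₂ _ (hmaps₂ hs))
    positivity
  have hXle0 : ∀ s ∈ Ioo (0:ℝ) m, 0 ≤ X₁ s ∧ 0 ≤ X₂ s := by
    intro s hs
    constructor
    · rw [← hX₁0]; exact hX₁mono hs.1.le
    · rw [← hX₂0]; exact hX₂mono hs.1.le
  have H12 : ∀ s ∈ Ioo (0:ℝ) m, X₁ s ≤ X₂ s →
      0 ≤ G' s * (a (X₁ s) * b (X₁ s) - a (X₂ s) * b (X₂ s)) := by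
    intro s hs hle
    obtain ⟨h01, h02⟩ := hXle0 s hs
    have hG'np : G' s ≤ 0 := hG'le s hs
    have habs : |X₁ s| ≤ |X₂ s| := by
      rw [abs_of_nonneg h01, abs_of_nonneg h02]; exact hle
    have h5 := habM (X₁ s) (hmaps₁ (Ioo_subset_Icc_self hs)) (X₂ s)
      (hmaps₂ (Ioo_subset_Icc_self hs)) habs
    have h6 : a (X₁ s) * b (X₁ s) - a (X₂ s) * b (X₂ s) ≤ 0 := by linarith
    nlinarith [mul_nonneg (neg_nonneg.2 hG'np) (neg_nonneg.2 h6)]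
  have H21 : ∀ s ∈ Ioo (0:ℝ) m, X₂ s ≤ X₁ s →
      0 ≤ G' s * (a (X₂ s) * b (X₂ s) - a (X₁ s) * b (X₁ s)) := by
    intro s hs hle
    obtain ⟨h01, h02⟩ := hXle0 s hs
    have hG'np : G' s ≤ 0 := hG'le s hs
    have habs : |X₂ s| ≤ |X₁ s| := by
      rw [abs_of_nonneg h01, abs_of_nonneg h02]; exact hle
    have h5 := habM (X₂ s) (hmaps₂ (Ioo_subset_Icc_self hs)) (X₁ s)
      (hmaps₁ (Ioo_subset_Icc_self hs)) habs
    have h6 : a (X₂ s) * b (X₂ s) - a (X₁ s) * b (X₁ s) ≤ 0 := by linarith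
    nlinarith [mul_nonneg (neg_nonneg.2 hG'np) (neg_nonneg.2 h6)]
  have hstart : X₁ 0 = X₂ 0 := by rw [hX₁0, hX₂0]
  have hq₁0 : q₁ 0 = (a 0 * u₁' 0)^2 := by rw [hq₁]; simp only; rw [hX₁0]
  have hq₂0 : q₂ 0 = (a 0 * u₂' 0)^2 := by rw [hq₂]; simp only; rw [hX₂0]
  have hp₁0 : 0 < a 0 * u₁' 0 := mul_pos (hapos 0 h0I) (hpos₁ 0 h0I)
  have hp₂0 : 0 < a 0 * u₂' 0 := mul_pos (hapos 0 h0I) (hpos₂ 0 h0I)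
  rcases lt_trichotomy (a 0 * u₂' 0) (a 0 * u₁' 0) with hlt|heq|hgt
  · exfalso
    have hq0 : q₂ 0 < q₁ 0 := by rw [hq₁0, hq₂0]; nlinarith
    exact skeleton hm hacont hapos (hX₁c.continuousOn) (hX₂c.continuousOn) hmaps₁ hmaps₂
      hq₁c hq₂c hq₁pos hq₂pos
      (fun s hs => hX₁d s (hsub' hs)) (fun s hs => hX₂d s (hsub' hs))
      (fun s hs => hq₁d s (hsub' hs)) (fun s hs => hq₂d s (hsub' hs))
      hstart hX₁M hX₂M hq0 H12
  · -- equal slopes at 0: genuine uniqueness via the IVP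
    have hsys₁ : SysPair L a b G' u₁ (fun x => a x * u₁' x) := by
      refine ⟨fun x hx => (hud₁ x hx).continuousWithinAt, hacont.mul hu'c₁, ?_, hpd₁⟩
      intro y hy
      rw [show a y * u₁' y / a y = u₁' y from by field_simp [(hapos y hy).ne']]
      exact hud₁ y hy
    have hsys₂ : SysPair L a b G' u₂ (fun x => a x * u₂' x) := by
      refine ⟨fun x hx => (hud₂ x hx).continuousWithinAt, hacont.mul hu'c₂, ?_, hpd₂⟩
      intro y hy
      rw [show a y * u₂' y / a y = u₂' y from by field_simp [(hapos y hy).ne']]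
      exact hud₂ y hy
    have huni := sys_unique hacont hbcont hapos hbpos haeven hbeven hG'lip hsys₁ hsys₂
      h0I (by rw [hu₁0, hu₂0]) heq.symm
    exact fun x hx => (huni x hx).1
  · exfalso
    have hq0 : q₁ 0 < q₂ 0 := by rw [hq₁0, hq₂0]; nlinarith
    exact skeleton hm hacont hapos (hX₂c.continuousOn) (hX₁c.continuousOn) hmaps₂ hmaps₁
      hq₂c hq₁c hq₂pos hq₁pos
      (fun s hs => hX₂d s (hsub' hs)) (fun s hs => hX₁d s (hsub' hs))
      (fun s hs => hq₂d s (hsub' hs)) (fun s hs => hq₁d s (hsub' hs))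
      hstart.symm hX₂M hX₁M hq0 H21

end Unique


/-- Theorem 1.3 / Proposition 4.1 of the paper.
With `a, b` positive even `C¹` weights, `G` even with locally Lipschitz derivative,
`(ab)' ≥ 0` on `(0, L)`, `G ≥ G(m)` on `(0, ∞)`, and `G' ≤ 0` on `(0, m)`,
the problem `-(a u')' = -b G'(u)`, `u(L) = -u(-L) = m` has at most one solution;
moreover every solution is odd and strictly increasing. -/
theorem stmt_7 (L m : ℝ) (hL : 0 < L) (hm : 0 < m) (a b ab' G G' : ℝ → ℝ)
    (haC1 : ContDiffOn ℝ 1 a (Icc (-L) L)) (hbC1 : ContDiffOn ℝ 1 b (Icc (-L) L))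
    (hapos : ∀ x ∈ Icc (-L) L, 0 < a x) (hbpos : ∀ x ∈ Icc (-L) L, 0 < b x)
    (haeven : ∀ x, a (-x) = a x) (hbeven : ∀ x, b (-x) = b x)
    (hGeven : ∀ s, G (-s) = G s)
    (hG : ∀ s, HasDerivAt G (G' s) s) (hG'lip : LocallyLipschitz G')
    (hab : ∀ x ∈ Icc (-L) L,
      HasDerivWithinAt (fun y => a y * b y) (ab' x) (Icc (-L) L) x)
    (habmono : ∀ x ∈ Ioo (0:ℝ) L, 0 ≤ ab' x)
    (hGge : ∀ s > (0:ℝ), G m ≤ G s)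
    (hG'le : ∀ s ∈ Ioo (0:ℝ) m, G' s ≤ 0) :
    (∀ u₁ u₂ : ℝ → ℝ, IsSolutionBVP L m a b G' u₁ → IsSolutionBVP L m a b G' u₂ →
      EqOn u₁ u₂ (Icc (-L) L)) ∧
    (∀ u : ℝ → ℝ, IsSolutionBVP L m a b G' u →
      (∀ x ∈ Icc (-L) L, u (-x) = -u x) ∧ StrictMonoOn u (Icc (-L) L)) := by
  have hacont := haC1.continuousOn
  have hbcont := hbC1.continuousOn
  constructor
  · intro u₁ u₂ h1 h2
    obtain ⟨u₁', hud₁, hu'c₁, hpd₁, hul₁, huL₁⟩ := h1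
    obtain ⟨u₂', hud₂, hu'c₂, hpd₂, hul₂, huL₂⟩ := h2
    intro x hx
    exact sol_eqOn hL hm hacont hbcont hapos hbpos haeven hbeven hGeven hG hG'lip
      hab habmono hGge hG'le hud₁ hu'c₁ hpd₁ hul₁ huL₁ hud₂ hu'c₂ hpd₂ hul₂ huL₂ x hx
  · intro u hu
    obtain ⟨u', hud, hu'c, hpd, hul, huL⟩ := hu
    constructor
    · exact sol_odd hL hm hacont hbcont hapos hbpos haeven hbeven hGeven hG hG'lip
        hab habmono hGge hG'le hud hu'c hpd hul huL
    · have hpos := sol_deriv_pos hL hm hacont hbcont hapos hbpos haeven hbeven hGeven hG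
        hG'lip hab habmono hGge hud hu'c hpd hul huL
      apply strictMonoOn_of_deriv_pos (convex_Icc _ _)
        (fun x hx => (hud x hx).continuousWithinAt)
      intro x hx
      rw [interior_Icc] at hx
      rw [((hud x (Ioo_subset_Icc_self hx)).hasDerivAt (Icc_mem_nhds hx.1 hx.2)).deriv]
      exact hpos x (Ioo_subset_Icc_self hx)
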